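/- If a graph G^s is obtained from G by applying m successive double-subdivisions of edges (each step subdivides one edge twice), then G has a vertex cover of size k if and only if G^s has a vertex cover of size k+m. -/

import Mathlib

/-- `C` is a vertex cover of `G`: every edge has an endpoint in `C`. -/
def IsVertexCover {V : Type*} (G : SimpleGraph V) (C : Finset V) : Prop :=
  ∀ ⦃a b : V⦄, G.Adj a b → a ∈ C ∨ b ∈ C

/-- `G'` is obtained from `G` (a graph on the countable vertex set `ℕ`) by
subdividing one edge `uv` twice: the edge `uv` is deleted and two fresh
vertices `x, y` are added together with the edges `ux`, `xy`, `yv`. -/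
def IsDoubleSubdivision (G G' : SimpleGraph ℕ) : Prop :=
  ∃ u v x y : ℕ, G.Adj u v ∧ x ≠ y ∧ x ∉ G.support ∧ y ∉ G.support ∧
    G' = SimpleGraph.fromEdgeSet
      ((G.edgeSet \ {s(u, v)}) ∪ {s(u, x), s(x, y), s(y, v)})

open Finset in
lemma step_iff (G G' : SimpleGraph ℕ) (h : IsDoubleSubdivision G G') (k : ℕ) :
    (∃ C : Finset ℕ, IsVertexCover G C ∧ C.card ≤ k) ↔
      (∃ C : Finset ℕ, IsVertexCover G' C ∧ C.card ≤ k + 1) := by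
  obtain ⟨u, v, x, y, huv, hxy, hx, hy, rfl⟩ := h
  have hus : u ∈ G.support := ⟨v, huv⟩
  have hvs : v ∈ G.support := ⟨u, huv.symm⟩
  have hxu : x ≠ u := fun h => hx (h ▸ hus)
  have hxv : x ≠ v := fun h => hx (h ▸ hvs)
  have hyu : y ≠ u := fun h => hy (h ▸ hus)
  have hyv : y ≠ v := fun h => hy (h ▸ hvs)
  have hnx : ∀ a b, G.Adj a b → a ≠ x ∧ a ≠ y :=
    fun a b hab => ⟨fun h => hx (h ▸ ⟨b, hab⟩), fun h => hy (h ▸ ⟨b, hab⟩)⟩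
  set E : Set (Sym2 ℕ) := (G.edgeSet \ {s(u,v)}) ∪ {s(u, x), s(x, y), s(y, v)} with hE
  have key : ∀ a b, (SimpleGraph.fromEdgeSet E).Adj a b →
      G.Adj a b ∨ s(a,b) = s(u,x) ∨ s(a,b) = s(x,y) ∨ s(a,b) = s(y,v) := by
    intro a b hab
    rw [SimpleGraph.fromEdgeSet_adj] at hab
    rcases hab.1 with h1 | h1
    · exact Or.inl ((SimpleGraph.mem_edgeSet G).mp h1.1)
    · rcases h1 with h1 | h1 | h1 <;> simp_all
  have adjG : ∀ a b, G.Adj a b → s(a,b) ≠ s(u,v) → (SimpleGraph.fromEdgeSet E).Adj a b := by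
    intro a b hab hne
    rw [SimpleGraph.fromEdgeSet_adj]
    exact ⟨Or.inl ⟨(SimpleGraph.mem_edgeSet G).mpr hab, hne⟩, hab.ne⟩
  have adjux : (SimpleGraph.fromEdgeSet E).Adj u x := by
    rw [SimpleGraph.fromEdgeSet_adj]
    exact ⟨Or.inr (by simp), hxu.symm⟩
  have adjxy : (SimpleGraph.fromEdgeSet E).Adj x y := by
    rw [SimpleGraph.fromEdgeSet_adj]
    exact ⟨Or.inr (by simp), hxy⟩
  have adjyv : (SimpleGraph.fromEdgeSet E).Adj y v := by
    rw [SimpleGraph.fromEdgeSet_adj]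
    exact ⟨Or.inr (by simp), hyv⟩
  constructor
  · rintro ⟨C, hC, hcard⟩
    rcases hC huv with hu | hv
    · refine ⟨insert y C, ?_, ?_⟩
      · intro a b hab
        rcases key a b hab with h | h | h | h
        · exact (hC h).imp (mem_insert_of_mem) (mem_insert_of_mem)
        · rcases Sym2.eq_iff.mp h with ⟨rfl, rfl⟩ | ⟨rfl, rfl⟩
          · exact Or.inl (mem_insert_of_mem hu)
          · exact Or.inr (mem_insert_of_mem hu)
        · rcases Sym2.eq_iff.mp h with ⟨rfl, rfl⟩ | ⟨rfl, rfl⟩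
          · exact Or.inr (mem_insert_self _ _)
          · exact Or.inl (mem_insert_self _ _)
        · rcases Sym2.eq_iff.mp h with ⟨rfl, rfl⟩ | ⟨rfl, rfl⟩
          · exact Or.inl (mem_insert_self _ _)
          · exact Or.inr (mem_insert_self _ _)
      · have := Finset.card_insert_le y C; omega
    · refine ⟨insert x C, ?_, ?_⟩
      · intro a b hab
        rcases key a b hab with h | h | h | h
        · exact (hC h).imp (mem_insert_of_mem) (mem_insert_of_mem)
        · rcases Sym2.eq_iff.mp h with ⟨rfl, rfl⟩ | ⟨rfl, rfl⟩
          · exact Or.inr (mem_insert_self _ _)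
          · exact Or.inl (mem_insert_self _ _)
        · rcases Sym2.eq_iff.mp h with ⟨rfl, rfl⟩ | ⟨rfl, rfl⟩
          · exact Or.inl (mem_insert_self _ _)
          · exact Or.inr (mem_insert_self _ _)
        · rcases Sym2.eq_iff.mp h with ⟨rfl, rfl⟩ | ⟨rfl, rfl⟩
          · exact Or.inr (mem_insert_of_mem hv)
          · exact Or.inl (mem_insert_of_mem hv)
      · have := Finset.card_insert_le x C; omega
  · rintro ⟨C, hC, hcard⟩
    rcases hC adjxy with hxC | hyC
    · by_cases hyC : y ∈ C
      · -- both x and y in C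
        refine ⟨insert u ((C.erase x).erase y), ?_, ?_⟩
        · intro a b hab
          by_cases he : s(a,b) = s(u,v)
          · rcases Sym2.eq_iff.mp he with ⟨rfl, rfl⟩ | ⟨rfl, rfl⟩
            · exact Or.inl (mem_insert_self _ _)
            · exact Or.inr (mem_insert_self _ _)
          · rcases hC (adjG a b hab he) with ha | hb
            · obtain ⟨h1, h2⟩ := hnx a b hab
              exact Or.inl (mem_insert_of_mem (mem_erase.mpr ⟨h2, mem_erase.mpr ⟨h1, ha⟩⟩))
            · obtain ⟨h1, h2⟩ := hnx b a hab.symm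
              exact Or.inr (mem_insert_of_mem (mem_erase.mpr ⟨h2, mem_erase.mpr ⟨h1, hb⟩⟩))
        · have c2 : y ∈ C.erase x := mem_erase.mpr ⟨hxy.symm, hyC⟩
          have e1 := Finset.card_erase_of_mem c2
          have e2 := Finset.card_erase_of_mem hxC
          have hp : 0 < (C.erase x).card := Finset.card_pos.mpr ⟨y, c2⟩
          have hle := Finset.card_insert_le u ((C.erase x).erase y)
          omega
      · -- x in C, y not in C, so v in C
        have hvC : v ∈ C := (hC adjyv).resolve_left hyC
        refine ⟨C.erase x, ?_, ?_⟩
        · intro a b hab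
          by_cases he : s(a,b) = s(u,v)
          · rcases Sym2.eq_iff.mp he with ⟨rfl, rfl⟩ | ⟨rfl, rfl⟩
            · exact Or.inr (mem_erase.mpr ⟨hxv.symm, hvC⟩)
            · exact Or.inl (mem_erase.mpr ⟨hxv.symm, hvC⟩)
          · rcases hC (adjG a b hab he) with ha | hb
            · exact Or.inl (mem_erase.mpr ⟨(hnx a b hab).1, ha⟩)
            · exact Or.inr (mem_erase.mpr ⟨(hnx b a hab.symm).1, hb⟩)
        · have e2 := Finset.card_erase_of_mem hxC
          have hp : 0 < C.card := Finset.card_pos.mpr ⟨x, hxC⟩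
          omega
    · by_cases hxC : x ∈ C
      · refine ⟨insert u ((C.erase x).erase y), ?_, ?_⟩
        · intro a b hab
          by_cases he : s(a,b) = s(u,v)
          · rcases Sym2.eq_iff.mp he with ⟨rfl, rfl⟩ | ⟨rfl, rfl⟩
            · exact Or.inl (mem_insert_self _ _)
            · exact Or.inr (mem_insert_self _ _)
          · rcases hC (adjG a b hab he) with ha | hb
            · obtain ⟨h1, h2⟩ := hnx a b hab
              exact Or.inl (mem_insert_of_mem (mem_erase.mpr ⟨h2, mem_erase.mpr ⟨h1, ha⟩⟩))
            · obtain ⟨h1, h2⟩ := hnx b a hab.symm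
              exact Or.inr (mem_insert_of_mem (mem_erase.mpr ⟨h2, mem_erase.mpr ⟨h1, hb⟩⟩))
        · have c2 : y ∈ C.erase x := mem_erase.mpr ⟨hxy.symm, hyC⟩
          have e1 := Finset.card_erase_of_mem c2
          have e2 := Finset.card_erase_of_mem hxC
          have hp : 0 < (C.erase x).card := Finset.card_pos.mpr ⟨y, c2⟩
          have hle := Finset.card_insert_le u ((C.erase x).erase y)
          omega
      · -- y in C, x not in C, so u in C
        have huC : u ∈ C := (hC adjux).resolve_right hxC
        refine ⟨C.erase y, ?_, ?_⟩
        · intro a b hab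
          by_cases he : s(a,b) = s(u,v)
          · rcases Sym2.eq_iff.mp he with ⟨rfl, rfl⟩ | ⟨rfl, rfl⟩
            · exact Or.inl (mem_erase.mpr ⟨hyu.symm, huC⟩)
            · exact Or.inr (mem_erase.mpr ⟨hyu.symm, huC⟩)
          · rcases hC (adjG a b hab he) with ha | hb
            · exact Or.inl (mem_erase.mpr ⟨(hnx a b hab).2, ha⟩)
            · exact Or.inr (mem_erase.mpr ⟨(hnx b a hab.symm).2, hb⟩)
        · have e2 := Finset.card_erase_of_mem hyC
          have hp : 0 < C.card := Finset.card_pos.mpr ⟨y, hyC⟩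
          omega

theorem stmt1 (m k : ℕ) (f : Fin (m + 1) → SimpleGraph ℕ)
    (hstep : ∀ i : Fin m, IsDoubleSubdivision (f i.castSucc) (f i.succ))
    (G Gs : SimpleGraph ℕ) (hG : f 0 = G) (hGs : f (Fin.last m) = Gs) :
    (∃ C : Finset ℕ, IsVertexCover G C ∧ C.card ≤ k) ↔
      (∃ C : Finset ℕ, IsVertexCover Gs C ∧ C.card ≤ k + m) := by
  subst hG hGs
  induction m with
  | zero => simp [Fin.last]
  | succ m ih =>
    have h1 := ih (fun i => f i.castSucc)
      (fun i => by simpa only [Fin.succ_castSucc] using hstep i.castSucc)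
    have h2 := step_iff _ _ (hstep (Fin.last m)) (k + m)
    rw [Fin.succ_last] at h2
    simp only [Fin.castSucc_zero] at h1
    exact h1.trans h2
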